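/- h(r) tends to −π as r tends to +∞, i.e. Tendsto h atTop (𝓝 (−π)). -/

import Mathlib

open MeasureTheory Real Filter

/-- `u r z = √(z(1−rz)/(z+r))`, the real branch of `|w_r|` on `(0, 1/r)`. -/
noncomputable def u (r z : ℝ) : ℝ := Real.sqrt (z * (1 - r * z) / (z + r))

/-- The period function `h` of the candidate maximal Klein bottles. -/
noncomputable def h (r : ℝ) : ℝ :=
  ∫ z in (0:ℝ)..(1/r),
    -2 * u r z * (-1 + z + r * (2 - 3 * z + r * (-4 + 4 * r + 3 * z))) / (r + z)

/-- `A₁ r = ∫₀^{1/r} u_r(z) dz`. -/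
noncomputable def A₁ (r : ℝ) : ℝ := ∫ z in (0:ℝ)..(1/r), u r z

/-- `A₂ r = ∫₀^{1/r} u_r(z)/(z+r) dz`. -/
noncomputable def A₂ (r : ℝ) : ℝ := ∫ z in (0:ℝ)..(1/r), u r z / (z + r)

namespace Stmt11Aux

/-- rescaled integrand after the substitution `z = s/r`. -/
noncomputable def g (r s : ℝ) : ℝ :=
  -2 * Real.sqrt (s * (1 - s)) *
    ((4*r^3 - 4*r^2 + 2*r - 1) + s / r * (3*r^2 - 3*r + 1)) /
    ((r^2 + s) * Real.sqrt (r^2 + s))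

lemma sqrt_quarter : ∫ s in (0:ℝ)..1, Real.sqrt (s * (1 - s)) = π / 8 := by
  have key : ∫ s in (0:ℝ)..1, Real.sqrt (1 - (2*s + (-1))^2) = π / 4 := by
    have := intervalIntegral.integral_comp_mul_add (a := (0:ℝ)) (b := 1)
      (fun x => Real.sqrt (1 - x^2)) (two_ne_zero) (-1)
    rw [this]
    norm_num [integral_sqrt_one_sub_sq]
    ring
  have congr1 : ∀ s : ℝ, Real.sqrt (1 - (2*s + (-1))^2) = 2 * Real.sqrt (s * (1-s)) := by
    intro s
    rw [show (1 - (2*s + (-1))^2) = 4 * (s * (1 - s)) by ring,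
      Real.sqrt_mul (by norm_num), show (4:ℝ) = 2^2 by norm_num,
      Real.sqrt_sq (by norm_num)]
  rw [intervalIntegral.integral_congr (g := fun s => 2 * Real.sqrt (s * (1-s)))
      (fun s _ => congr1 s), intervalIntegral.integral_const_mul] at key
  linarith

lemma h_eq {r : ℝ} (hr : 1 ≤ r) : h r = ∫ s in (0:ℝ)..1, g r s := by
  have hr0 : (0:ℝ) < r := lt_of_lt_of_le one_pos hr
  have hsub := intervalIntegral.inv_smul_integral_comp_div (a := (0:ℝ)) (b := 1)
    (fun z => -2 * u r z * (-1 + z + r * (2 - 3 * z + r * (-4 + 4 * r + 3 * z))) / (r + z)) r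
  rw [zero_div] at hsub
  rw [h, ← hsub, ← intervalIntegral.integral_smul]
  apply intervalIntegral.integral_congr
  intro s hs
  rw [Set.uIcc_of_le (by norm_num : (0:ℝ) ≤ 1)] at hs
  obtain ⟨hs0, hs1⟩ := hs
  show r⁻¹ • (-2 * u r (s/r) * (-1 + s/r + r * (2 - 3 * (s/r) + r * (-4 + 4 * r + 3 * (s/r)))) / (r + s/r)) = g r s
  have hd : (0:ℝ) < r^2 + s := by positivity
  have hS : (0:ℝ) < Real.sqrt (r^2 + s) := Real.sqrt_pos.mpr hd
  have hden : (0:ℝ) < s/r + r := by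
    have := div_nonneg hs0 hr0.le; linarith
  have hu : u r (s/r) = Real.sqrt (s*(1-s)) / Real.sqrt (r^2+s) := by
    rw [u, show s/r * (1 - r * (s/r)) / (s/r + r) = s*(1-s)/(r^2+s) by
      rw [div_eq_div_iff hden.ne' hd.ne']; field_simp; ring]
    exact Real.sqrt_div (by nlinarith) _
  rw [smul_eq_mul, hu, g]
  have hrs : (0:ℝ) < r + s/r := by linarith [hden]
  field_simp
  ring

lemma bounds {r s : ℝ} (hr : 1 ≤ r) (hs : s ∈ Set.Icc (0:ℝ) 1) :
    (-2*((4*r^3 - 4*r^2 + 2*r - 1) + 1/r*(3*r^2 - 3*r + 1))/r^3) * Real.sqrt (s*(1-s)) ≤ g r s ∧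
    g r s ≤ (-2*(4*r^3 - 4*r^2 + 2*r - 1)/(r+1)^3) * Real.sqrt (s*(1-s)) := by
  obtain ⟨hs0, hs1⟩ := hs
  have hr0 : (0:ℝ) < r := lt_of_lt_of_le one_pos hr
  set A := Real.sqrt (s*(1-s)) with hA
  have hA0 : 0 ≤ A := Real.sqrt_nonneg _
  set a := 4*r^3 - 4*r^2 + 2*r - 1 with ha
  set b := 3*r^2 - 3*r + 1 with hb
  have ha0 : 0 < a := by rw [ha]; nlinarith
  have hb0 : 0 < b := by rw [hb]; nlinarith
  set Q := a + s/r * b with hQ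
  have hQ1 : a ≤ Q := by
    have : 0 ≤ s/r * b := mul_nonneg (div_nonneg hs0 hr0.le) hb0.le
    rw [hQ]; linarith
  have hQ2 : Q ≤ a + 1/r * b := by
    rw [hQ]
    have : s/r ≤ 1/r := by gcongr
    nlinarith
  have hd : (0:ℝ) < r^2 + s := by positivity
  have hS : (0:ℝ) < Real.sqrt (r^2 + s) := Real.sqrt_pos.mpr hd
  set D := (r^2+s) * Real.sqrt (r^2+s) with hD
  have hDpos : 0 < D := by positivity
  have hSl : r ≤ Real.sqrt (r^2+s) := by
    calc r = Real.sqrt (r^2) := (Real.sqrt_sq hr0.le).symm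
    _ ≤ Real.sqrt (r^2+s) := Real.sqrt_le_sqrt (by linarith)
  have hSu : Real.sqrt (r^2+s) ≤ r + 1 := by
    calc Real.sqrt (r^2+s) ≤ Real.sqrt ((r+1)^2) := Real.sqrt_le_sqrt (by nlinarith)
    _ = r + 1 := Real.sqrt_sq (by linarith)
  have hD1 : r^3 ≤ D := by
    calc r^3 = r^2 * r := by ring
    _ ≤ (r^2+s) * Real.sqrt (r^2+s) :=
        mul_le_mul (by linarith) hSl hr0.le (by positivity)
  have hD2 : D ≤ (r+1)^3 := by
    calc D ≤ (r+1)^2 * (r+1) :=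
        mul_le_mul (by nlinarith) hSu hS.le (by positivity)
    _ = (r+1)^3 := by ring
  have hgval : g r s = -(2*A*Q/D) := by rw [g, hD, hQ, ha, hb, hA]; ring
  constructor
  · have key : 2*A*Q/D ≤ 2*A*(a + 1/r*b)/r^3 :=
      div_le_div₀ (by positivity) (by nlinarith) (by positivity) hD1
    rw [hgval]
    have : (-2*((a) + 1/r*(b))/r^3) * A = -(2*A*(a + 1/r*b)/r^3) := by ring
    rw [this]
    linarith
  · have key : 2*A*a/(r+1)^3 ≤ 2*A*Q/D :=
      div_le_div₀ (by positivity) (by nlinarith) hDpos hD2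
    rw [hgval]
    have : (-2*(a)/(r+1)^3) * A = -(2*A*a/(r+1)^3) := by ring
    rw [this]
    linarith

lemma sqrt_integrable : IntervalIntegrable (fun s : ℝ => Real.sqrt (s*(1-s))) volume 0 1 :=
  (Real.continuous_sqrt.comp (by fun_prop)).intervalIntegrable 0 1

lemma g_integrable {r : ℝ} (hr : 1 ≤ r) : IntervalIntegrable (g r) volume 0 1 := by
  have hr0 : (0:ℝ) < r := lt_of_lt_of_le one_pos hr
  apply ContinuousOn.intervalIntegrable
  apply ContinuousOn.div
  · apply Continuous.continuousOn
    fun_prop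
  · apply Continuous.continuousOn
    fun_prop
  · intro x hx
    rw [Set.uIcc_of_le (by norm_num : (0:ℝ) ≤ 1)] at hx
    have hd : (0:ℝ) < x^2 + r := by nlinarith [hx.1]
    have : (0:ℝ) < r^2 + x := by nlinarith [hx.1]
    positivity

lemma h_bounds {r : ℝ} (hr : 1 ≤ r) :
    (-2*((4*r^3 - 4*r^2 + 2*r - 1) + 1/r*(3*r^2 - 3*r + 1))/r^3) * (π/8) ≤ h r ∧
    h r ≤ (-2*(4*r^3 - 4*r^2 + 2*r - 1)/(r+1)^3) * (π/8) := by
  have h01 : (0:ℝ) ≤ 1 := by norm_num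
  rw [h_eq hr]
  constructor
  · have := intervalIntegral.integral_mono_on (μ := volume) h01
      (sqrt_integrable.const_mul _) (g_integrable hr)
      (fun x hx => (bounds hr hx).1)
    rwa [intervalIntegral.integral_const_mul, sqrt_quarter] at this
  · have := intervalIntegral.integral_mono_on (μ := volume) h01
      (g_integrable hr) (sqrt_integrable.const_mul _)
      (fun x hx => (bounds hr hx).2)
    rwa [intervalIntegral.integral_const_mul, sqrt_quarter] at this

lemma tendsto_lower :
    Tendsto (fun r : ℝ => (-2*((4*r^3 - 4*r^2 + 2*r - 1) + 1/r*(3*r^2 - 3*r + 1))/r^3) * (π/8))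
      atTop (nhds (-π)) := by
  have hcont : ContinuousAt (fun t : ℝ => (-2*(4 - 4*t + 5*t^2 - 4*t^3 + t^4)) * (π/8)) 0 := by
    fun_prop
  have hval : (fun t : ℝ => (-2*(4 - 4*t + 5*t^2 - 4*t^3 + t^4)) * (π/8)) 0 = -π := by
    norm_num; ring
  have hlim : Tendsto (fun r : ℝ => (-2*(4 - 4*r⁻¹ + 5*r⁻¹^2 - 4*r⁻¹^3 + r⁻¹^4)) * (π/8))
      atTop (nhds (-π)) := by
    rw [← hval]
    exact (hcont.tendsto).comp tendsto_inv_atTop_zero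
  apply hlim.congr'
  filter_upwards [eventually_ge_atTop (1:ℝ)] with r hr
  have hr0 : r ≠ 0 := by positivity
  field_simp
  ring

lemma tendsto_upper :
    Tendsto (fun r : ℝ => (-2*(4*r^3 - 4*r^2 + 2*r - 1)/(r+1)^3) * (π/8))
      atTop (nhds (-π)) := by
  have hcont : ContinuousAt (fun t : ℝ => (-2*((4 - 4*t + 2*t^2 - t^3)/(1+t)^3)) * (π/8)) 0 := by
    apply ContinuousAt.mul _ continuousAt_const
    apply ContinuousAt.mul continuousAt_const
    apply ContinuousAt.div (by fun_prop) (by fun_prop)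
    norm_num
  have hval : (fun t : ℝ => (-2*((4 - 4*t + 2*t^2 - t^3)/(1+t)^3)) * (π/8)) 0 = -π := by
    norm_num; ring
  have hlim : Tendsto (fun r : ℝ => (-2*((4 - 4*r⁻¹ + 2*r⁻¹^2 - r⁻¹^3)/(1+r⁻¹)^3)) * (π/8))
      atTop (nhds (-π)) := by
    rw [← hval]
    exact (hcont.tendsto).comp tendsto_inv_atTop_zero
  apply hlim.congr'
  filter_upwards [eventually_ge_atTop (1:ℝ)] with r hr
  have hr0 : (0:ℝ) < r := lt_of_lt_of_le one_pos hr
  have h1 : (1:ℝ) + r⁻¹ ≠ 0 := by positivity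
  have h2 : r + 1 ≠ 0 := by positivity
  field_simp

end Stmt11Aux

theorem stmt_11 : Filter.Tendsto h Filter.atTop (nhds (-Real.pi)) := by
  apply tendsto_of_tendsto_of_tendsto_of_le_of_le' Stmt11Aux.tendsto_lower Stmt11Aux.tendsto_upper
  · filter_upwards [eventually_ge_atTop (1:ℝ)] with r hr
    exact (Stmt11Aux.h_bounds hr).1
  · filter_upwards [eventually_ge_atTop (1:ℝ)] with r hr
    exact (Stmt11Aux.h_bounds hr).2
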